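/- Let F be a field, let s, n be natural numbers with s+1 < n, and let y1, y2 ∈ F with y1 ≠ y2. Define ρ(h) := (h·g_{y1}) /ₘ g_{y2} for h ∈ F[X]. Then ρ maps the set of polynomials of degree < n−(s+1) into itself, is F-linear, and is a bijection of the F-vector space of polynomials of degree < n−(s+1) onto itself. -/

import Mathlib

open Polynomial

lemma my_add_divByMonic {R : Type*} [CommRing R] (p₁ p₂ q : R[X]) :
    (p₁ + p₂) /ₘ q = p₁ /ₘ q + p₂ /ₘ q := by
  by_cases hq : q.Monic
  · cases' subsingleton_or_nontrivial R with hR hR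
    · simp only [eq_iff_true_of_subsingleton]
    · exact (div_modByMonic_unique (p₁ /ₘ q + p₂ /ₘ q) (p₁ %ₘ q + p₂ %ₘ q) hq
        ⟨by linear_combination (modByMonic_add_div p₁ q) + (modByMonic_add_div p₂ q),
          (degree_add_le _ _).trans_lt
            (max_lt (degree_modByMonic_lt _ hq) (degree_modByMonic_lt _ hq))⟩).1
  · simp_rw [divByMonic_eq_of_not_monic _ hq, add_zero]

lemma my_smul_divByMonic {R : Type*} [CommRing R] (a : R) (p q : R[X]) :
    (C a * p) /ₘ q = C a * (p /ₘ q) := by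
  by_cases hq : q.Monic
  · cases' subsingleton_or_nontrivial R with hR hR
    · simp only [eq_iff_true_of_subsingleton]
    · exact (div_modByMonic_unique (C a * (p /ₘ q)) (C a * (p %ₘ q)) hq
        ⟨by rw [mul_left_comm, ← mul_add, modByMonic_add_div _ q],
          ((C_mul' a (p %ₘ q) ▸ degree_smul_le a (p %ₘ q))).trans_lt
            (degree_modByMonic_lt _ hq)⟩).1
  · simp_rw [divByMonic_eq_of_not_monic _ hq, mul_zero]

/-- For `y ∈ F`, the polynomial `g_y = (X - y)^(s+1)`. -/
noncomputable def gPoly {F : Type*} [Field F] (s : ℕ) (y : F) : F[X] := (X - C y) ^ (s + 1)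

/-- The map `ρ(h) = (h · g_{y1}) /ₘ g_{y2}` preserves the space of polynomials of
degree `< n - (s+1)`, is `F`-linear, and is a bijection of that space onto itself. -/
theorem stmt_15 {F : Type*} [Field F] (s n : ℕ) (hsn : s + 1 < n)
    (y1 y2 : F) (hy : y1 ≠ y2) :
    (∀ h : F[X], h.degree < (n - (s + 1) : ℕ) →
        ((h * gPoly s y1) /ₘ gPoly s y2).degree < (n - (s + 1) : ℕ)) ∧
    (∀ h h' : F[X],
        ((h + h') * gPoly s y1) /ₘ gPoly s y2 =
          (h * gPoly s y1) /ₘ gPoly s y2 + (h' * gPoly s y1) /ₘ gPoly s y2) ∧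
    (∀ (a : F) (h : F[X]),
        ((C a * h) * gPoly s y1) /ₘ gPoly s y2 = C a * ((h * gPoly s y1) /ₘ gPoly s y2)) ∧
    Set.BijOn (fun h : F[X] => (h * gPoly s y1) /ₘ gPoly s y2)
      {h : F[X] | h.degree < (n - (s + 1) : ℕ)}
      {h : F[X] | h.degree < (n - (s + 1) : ℕ)} := by
  set m := n - (s + 1) with hmdef
  have hm : 0 < m := Nat.sub_pos_of_lt hsn
  set g1 := gPoly s y1 with hg1
  set g2 := gPoly s y2 with hg2
  have hmon1 : g1.Monic := (monic_X_sub_C y1).pow _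
  have hmon2 : g2.Monic := (monic_X_sub_C y2).pow _
  have hg1ne : g1 ≠ 0 := hmon1.ne_zero
  have hg2ne : g2 ≠ 0 := hmon2.ne_zero
  have hnd1 : g1.natDegree = s + 1 := by
    simp [hg1, gPoly, natDegree_pow]
  have hnd2 : g2.natDegree = s + 1 := by
    simp [hg2, gPoly, natDegree_pow]
  -- degree preservation
  have key1 : ∀ h : F[X], h.degree < (m : ℕ) → ((h * g1) /ₘ g2).degree < (m : ℕ) := by
    intro h hh
    rcases eq_or_ne h 0 with rfl | hne
    · simp only [zero_mul, zero_divByMonic, degree_zero]; exact WithBot.bot_lt_coe m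
    · have hnd : ((h * g1) /ₘ g2).natDegree = h.natDegree := by
        rw [natDegree_divByMonic _ hmon2, natDegree_mul hne hg1ne, hnd1, hnd2,
          Nat.add_sub_cancel]
      calc ((h * g1) /ₘ g2).degree ≤ (((h * g1) /ₘ g2).natDegree : WithBot ℕ) :=
            degree_le_natDegree
        _ = (h.natDegree : WithBot ℕ) := by rw [hnd]
        _ = h.degree := (degree_eq_natDegree hne).symm
        _ < (m : ℕ) := hh
  -- additivity
  have key2 : ∀ h h' : F[X], ((h + h') * g1) /ₘ g2 = (h * g1) /ₘ g2 + (h' * g1) /ₘ g2 := by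
    intro h h'
    rw [add_mul, my_add_divByMonic]
  -- scalar
  have key3 : ∀ (a : F) (h : F[X]), ((C a * h) * g1) /ₘ g2 = C a * ((h * g1) /ₘ g2) := by
    intro a h
    rw [mul_assoc, my_smul_divByMonic]
  -- injectivity on all of F[X]
  have keyinj : ∀ h h' : F[X], (h * g1) /ₘ g2 = (h' * g1) /ₘ g2 → h = h' := by
    intro h h' he
    by_contra hne
    have hne' : h - h' ≠ 0 := sub_ne_zero.mpr hne
    have hsub : ((h - h') * g1) /ₘ g2 = 0 := by
      have e : (h - h') * g1 = h * g1 + C (-1 : F) * (h' * g1) := by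
        rw [map_neg, map_one]; ring
      rw [e, my_add_divByMonic, my_smul_divByMonic, he, map_neg, map_one, neg_one_mul,
        add_neg_cancel]
    rw [divByMonic_eq_zero_iff hmon2] at hsub
    have hmulne : (h - h') * g1 ≠ 0 := mul_ne_zero hne' hg1ne
    rw [degree_eq_natDegree hmulne, degree_eq_natDegree hg2ne, Nat.cast_lt,
      natDegree_mul hne' hg1ne, hnd1, hnd2] at hsub
    omega
  refine ⟨key1, key2, key3, fun h hh => key1 h hh, fun a _ b _ hab => keyinj a b hab, ?_⟩
  -- surjectivity via finite dimension
  let L : degreeLT F m →ₗ[F] degreeLT F m :=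
    { toFun := fun h => ⟨(h.1 * g1) /ₘ g2, mem_degreeLT.2 (key1 h.1 (mem_degreeLT.1 h.2))⟩
      map_add' := fun a b => Subtype.ext (by
        show ((a.1 + b.1) * g1) /ₘ g2 = (a.1 * g1) /ₘ g2 + (b.1 * g1) /ₘ g2
        exact key2 a.1 b.1)
      map_smul' := fun a b => Subtype.ext (by
        show ((a • b.1) * g1) /ₘ g2 = a • ((b.1 * g1) /ₘ g2)
        rw [smul_eq_C_mul, smul_eq_C_mul]
        exact key3 a b.1) }
  haveI : FiniteDimensional F (degreeLT F m) := (degreeLTEquiv F m).symm.finiteDimensional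
  have hLinj : Function.Injective L := fun a b hab =>
    Subtype.ext (keyinj a.1 b.1 (congrArg Subtype.val hab))
  have hLsurj : Function.Surjective L := LinearMap.injective_iff_surjective.mp hLinj
  intro f hf
  obtain ⟨h, hh⟩ := hLsurj ⟨f, mem_degreeLT.2 hf⟩
  exact ⟨h.1, mem_degreeLT.1 h.2, congrArg Subtype.val hh⟩
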